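/- Let T be a bounded linear operator on L²(ℝ, ℂ) such that for all Schwartz functions ψ, χ ∈ 𝒮(ℝ, ℂ): ⟨T(ψ₁), χ⟩ = ⟨Tψ, χ₁⟩ where ψ₁(x) = x²ψ(x), χ₁(x) = x²χ(x), and ⟨T(ψ''), χ⟩ = ⟨Tψ, χ''⟩. Then T also weakly commutes with the operator S = 4x·(d/dx) + 2, in the sense that ⟨T(Sψ), χ⟩ = −⟨Tψ, Sχ⟩ for all ψ, χ ∈ 𝒮(ℝ, ℂ), where (Sψ)(x) = 4x·ψ'(x) + 2ψ(x). -/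

import Mathlib

open MeasureTheory
open SchwartzMap

noncomputable section

namespace MetaplecticAux

lemma hasDerivAt_sq (x : ℝ) : HasDerivAt (fun x : ℝ => (x : ℂ) ^ 2) (2 * (x : ℂ)) x := by
  simpa [mul_comm] using (hasDerivAt_pow 2 (x : ℂ)).comp_ofReal

lemma tg_sq : Function.HasTemperateGrowth (fun x : ℝ => (x : ℂ) ^ 2) := by
  set L : ℝ →L[ℝ] (ℝ →L[ℝ] ℂ) :=
    (2 : ℝ) • ((ContinuousLinearMap.smulRightL ℝ ℝ ℂ (1 : ℝ →L[ℝ] ℝ)).comp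
      Complex.ofRealCLM) with hL
  have hfd : fderiv ℝ (fun x : ℝ => (x : ℂ) ^ 2) = ⇑L := by
    funext x
    rw [(hasDerivAt_sq x).hasFDerivAt.fderiv]
    ext1
    simp [hL, ContinuousLinearMap.smulRightL, ContinuousLinearMap.smulRight_apply,
      Complex.real_smul]
  refine Function.HasTemperateGrowth.of_fderiv ?_
    (fun x => (hasDerivAt_sq x).differentiableAt) (k := 2) (C := 1) (fun x => ?_)
  · rw [hfd]; exact L.hasTemperateGrowth
  · have h1 : ‖(x : ℂ) ^ 2‖ = |x| ^ 2 := by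
      rw [norm_pow, Complex.norm_real, Real.norm_eq_abs]
    rw [h1, one_mul, Real.norm_eq_abs]
    gcongr
    linarith [abs_nonneg x]

def mulX2 : 𝓢(ℝ, ℂ) →L[ℝ] 𝓢(ℝ, ℂ) :=
  bilinLeftCLM (ContinuousLinearMap.mul ℝ ℂ) tg_sq

lemma mulX2_apply (f : 𝓢(ℝ, ℂ)) (x : ℝ) : mulX2 f x = f x * (x : ℂ) ^ 2 := rfl

lemma memL2 (f : 𝓢(ℝ, ℂ)) : MemLp (⇑f) 2 (volume : Measure ℝ) := by
  rw [memLp_two_iff_integrable_sq_norm f.continuous.aestronglyMeasurable]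
  have hC := SchwartzMap.norm_le_seminorm ℝ f
  refine ((f.integrable (μ := volume)).norm.const_mul
    (SchwartzMap.seminorm ℝ 0 0 f)).mono' ?_ ?_
  · exact (f.continuous.norm.pow 2).aestronglyMeasurable
  · refine Filter.Eventually.of_forall fun x => ?_
    have h0 : 0 ≤ ‖f x‖ := norm_nonneg _
    calc ‖‖f x‖ ^ 2‖ = ‖f x‖ * ‖f x‖ := by
            rw [Real.norm_eq_abs, abs_of_nonneg (by positivity), sq]
      _ ≤ SchwartzMap.seminorm ℝ 0 0 f * ‖f x‖ := by gcongr; exact hC x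
      
def toL2 (f : 𝓢(ℝ, ℂ)) : Lp ℂ 2 (volume : Measure ℝ) := (memL2 f).toLp f

lemma coe_toL2 (f : 𝓢(ℝ, ℂ)) : ⇑(toL2 f) =ᵐ[volume] ⇑f := MemLp.coeFn_toLp _

end MetaplecticAux

namespace MetaplecticAux

lemma coe_dd (f : 𝓢(ℝ, ℂ)) :
    ⇑(derivCLM ℝ ℂ (derivCLM ℝ ℂ f)) = deriv (deriv ⇑f) := by
  have h1 : ⇑(derivCLM ℝ ℂ f) = deriv ⇑f := funext fun x => derivCLM_apply (𝕜 := ℝ) f x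
  funext x
  rw [derivCLM_apply, h1]

lemma deriv2_mulX2 (f : 𝓢(ℝ, ℂ)) (x : ℝ) :
    deriv (deriv ⇑(mulX2 f)) x
      = 4 * (x : ℂ) * deriv (⇑f) x + 2 * f x + (x : ℂ) ^ 2 * deriv (deriv ⇑f) x := by
  have hcoe : ⇑(mulX2 f) = fun y : ℝ => f y * (y : ℂ) ^ 2 := funext (mulX2_apply f)
  have hd1 : deriv ⇑(mulX2 f)
      = fun y : ℝ => deriv (⇑f) y * (y : ℂ) ^ 2 + f y * (2 * y) := by
    funext y
    rw [hcoe]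
    exact ((f.differentiable y).hasDerivAt.mul (hasDerivAt_sq y)).deriv
  have hfd : ⇑(derivCLM ℝ ℂ f) = deriv ⇑f := funext fun x => derivCLM_apply (𝕜 := ℝ) f x
  have hdf : HasDerivAt (deriv ⇑f) (deriv (deriv ⇑f) x) x := by
    rw [← hfd]
    exact ((derivCLM ℝ ℂ f).differentiable x).hasDerivAt
  have h2x : HasDerivAt (fun y : ℝ => 2 * (y : ℂ)) 2 x := by
    simpa using ((hasDerivAt_id (x : ℂ)).const_mul 2).comp_ofReal
  have hterm1 : HasDerivAt (fun y : ℝ => deriv (⇑f) y * (y : ℂ) ^ 2)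
      (deriv (deriv ⇑f) x * (x : ℂ) ^ 2 + deriv (⇑f) x * (2 * x)) x :=
    hdf.mul (hasDerivAt_sq x)
  have hterm2 : HasDerivAt (fun y : ℝ => f y * (2 * (y : ℂ)))
      (deriv (⇑f) x * (2 * x) + f x * 2) x :=
    (f.differentiable x).hasDerivAt.mul h2x
  have : deriv (fun y : ℝ => deriv (⇑f) y * (y : ℂ) ^ 2 + f y * (2 * (y : ℂ))) x = _ :=
    (hterm1.add hterm2).deriv
  rw [hd1]
  rw [show (fun y : ℝ => deriv (⇑f) y * (y : ℂ) ^ 2 + f y * (2 * y))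
      = fun y : ℝ => deriv (⇑f) y * (y : ℂ) ^ 2 + f y * (2 * (y : ℂ)) from rfl, this]
  ring

end MetaplecticAux

open MetaplecticAux

/-- A bounded operator on `L²(ℝ, ℂ)` weakly commuting with multiplication by `x²`
and with `d²/dx²` also weakly commutes (up to the sign coming from formal
skew-adjointness) with their commutator `S = [d²/dx², x²] = 4x·d/dx + 2`. The
hypotheses and conclusion quantify over `L²` representatives of the relevant
Schwartz-class functions. -/
theorem commutes_with_metaplectic_generator
    (T : Lp ℂ 2 (volume : Measure ℝ) →L[ℂ] Lp ℂ 2 (volume : Measure ℝ))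
    (hx2 : ∀ (ψ χ : SchwartzMap ℝ ℂ) (Fψ Fψ₁ Fχ Fχ₁ : Lp ℂ 2 (volume : Measure ℝ)),
      ⇑Fψ =ᵐ[volume] ⇑ψ → ⇑Fψ₁ =ᵐ[volume] (fun x : ℝ => (x : ℂ) ^ 2 * ψ x) →
      ⇑Fχ =ᵐ[volume] ⇑χ → ⇑Fχ₁ =ᵐ[volume] (fun x : ℝ => (x : ℂ) ^ 2 * χ x) →
      (inner ℂ (T Fψ₁) Fχ : ℂ) = inner ℂ (T Fψ) Fχ₁)
    (hdd : ∀ (ψ χ : SchwartzMap ℝ ℂ) (Fψ Fψ'' Fχ Fχ'' : Lp ℂ 2 (volume : Measure ℝ)),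
      ⇑Fψ =ᵐ[volume] ⇑ψ → ⇑Fψ'' =ᵐ[volume] deriv (deriv ⇑ψ) →
      ⇑Fχ =ᵐ[volume] ⇑χ → ⇑Fχ'' =ᵐ[volume] deriv (deriv ⇑χ) →
      (inner ℂ (T Fψ'') Fχ : ℂ) = inner ℂ (T Fψ) Fχ'') :
    ∀ (ψ χ : SchwartzMap ℝ ℂ) (Fψ FSψ Fχ FSχ : Lp ℂ 2 (volume : Measure ℝ)),
      ⇑Fψ =ᵐ[volume] ⇑ψ →
      ⇑FSψ =ᵐ[volume] (fun x : ℝ => 4 * (x : ℂ) * deriv (⇑ψ) x + 2 * ψ x) →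
      ⇑Fχ =ᵐ[volume] ⇑χ →
      ⇑FSχ =ᵐ[volume] (fun x : ℝ => 4 * (x : ℂ) * deriv (⇑χ) x + 2 * χ x) →
      (inner ℂ (T FSψ) Fχ : ℂ) = -(inner ℂ (T Fψ) FSχ : ℂ) := by
  intro ψ χ Fψ FSψ Fχ FSχ hψ hSψ hχ hSχ
  set ψdd := derivCLM ℝ ℂ (derivCLM ℝ ℂ ψ) with hψdd_def
  set χdd := derivCLM ℝ ℂ (derivCLM ℝ ℂ χ) with hχdd_def
  -- coercion facts
  have cψdd : ⇑(toL2 ψdd) =ᵐ[volume] deriv (deriv ⇑ψ) := (coe_toL2 ψdd).trans (by rw [coe_dd])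
  have cχdd : ⇑(toL2 χdd) =ᵐ[volume] deriv (deriv ⇑χ) := (coe_toL2 χdd).trans (by rw [coe_dd])
  have cmψ : ⇑(toL2 (mulX2 ψ)) =ᵐ[volume] (fun x : ℝ => (x : ℂ) ^ 2 * ψ x) :=
    (coe_toL2 (mulX2 ψ)).trans
      (Filter.EventuallyEq.of_eq (funext fun x => by rw [mulX2_apply, mul_comm]))
  have cmχ : ⇑(toL2 (mulX2 χ)) =ᵐ[volume] (fun x : ℝ => (x : ℂ) ^ 2 * χ x) :=
    (coe_toL2 (mulX2 χ)).trans
      (Filter.EventuallyEq.of_eq (funext fun x => by rw [mulX2_apply, mul_comm]))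
  have cmψdd : ⇑(toL2 (mulX2 ψdd)) =ᵐ[volume]
      (fun x : ℝ => (x : ℂ) ^ 2 * deriv (deriv ⇑ψ) x) :=
    (coe_toL2 (mulX2 ψdd)).trans
      (Filter.EventuallyEq.of_eq (funext fun x => by
        rw [mulX2_apply, mul_comm, hψdd_def, coe_dd]))
  have cmχdd : ⇑(toL2 (mulX2 χdd)) =ᵐ[volume]
      (fun x : ℝ => (x : ℂ) ^ 2 * deriv (deriv ⇑χ) x) :=
    (coe_toL2 (mulX2 χdd)).trans
      (Filter.EventuallyEq.of_eq (funext fun x => by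
        rw [mulX2_apply, mul_comm, hχdd_def, coe_dd]))
  have cddmψ : ⇑(toL2 (derivCLM ℝ ℂ (derivCLM ℝ ℂ (mulX2 ψ)))) =ᵐ[volume]
      deriv (deriv ⇑(mulX2 ψ)) :=
    (coe_toL2 _).trans (by rw [coe_dd])
  have cddmχ : ⇑(toL2 (derivCLM ℝ ℂ (derivCLM ℝ ℂ (mulX2 χ)))) =ᵐ[volume]
      deriv (deriv ⇑(mulX2 χ)) :=
    (coe_toL2 _).trans (by rw [coe_dd])
  -- decompose FSψ
  have key1 : FSψ = toL2 (derivCLM ℝ ℂ (derivCLM ℝ ℂ (mulX2 ψ))) - toL2 (mulX2 ψdd) := by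
    apply Lp.ext
    have hsub := Lp.coeFn_sub (toL2 (derivCLM ℝ ℂ (derivCLM ℝ ℂ (mulX2 ψ)))) (toL2 (mulX2 ψdd))
    filter_upwards [hSψ, hsub, cddmψ, cmψdd] with x h1 h2 h3 h4
    rw [h1, h2, Pi.sub_apply, h3, h4, deriv2_mulX2]
    ring
  have key2 : toL2 (mulX2 χdd) - toL2 (derivCLM ℝ ℂ (derivCLM ℝ ℂ (mulX2 χ))) = -FSχ := by
    apply Lp.ext
    have hsub := Lp.coeFn_sub (toL2 (mulX2 χdd)) (toL2 (derivCLM ℝ ℂ (derivCLM ℝ ℂ (mulX2 χ))))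
    have hneg := Lp.coeFn_neg FSχ
    filter_upwards [hSχ, hsub, hneg, cddmχ, cmχdd] with x h1 h2 h3 h4 h5
    rw [h2, Pi.sub_apply, h4, h5, h3, Pi.neg_apply, h1, deriv2_mulX2]
    ring
  have step1 : (inner ℂ (T (toL2 (derivCLM ℝ ℂ (derivCLM ℝ ℂ (mulX2 ψ))))) Fχ : ℂ)
      = inner ℂ (T (toL2 (mulX2 ψ))) (toL2 χdd) :=
    hdd (mulX2 ψ) χ (toL2 (mulX2 ψ)) _ Fχ (toL2 χdd) (coe_toL2 _) cddmψ hχ cχdd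
  have step2 : (inner ℂ (T (toL2 (mulX2 ψ))) (toL2 χdd) : ℂ)
      = inner ℂ (T Fψ) (toL2 (mulX2 χdd)) :=
    hx2 ψ χdd Fψ (toL2 (mulX2 ψ)) (toL2 χdd) (toL2 (mulX2 χdd)) hψ cmψ
      ((coe_toL2 χdd).trans (Filter.EventuallyEq.of_eq (coe_dd χ))) cmχdd
  have step3 : (inner ℂ (T (toL2 (mulX2 ψdd))) Fχ : ℂ)
      = inner ℂ (T (toL2 ψdd)) (toL2 (mulX2 χ)) :=
    hx2 ψdd χ (toL2 ψdd) (toL2 (mulX2 ψdd)) Fχ (toL2 (mulX2 χ)) (coe_toL2 _)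
      ((coe_toL2 _).trans
        (Filter.EventuallyEq.of_eq (funext fun x => by rw [mulX2_apply, mul_comm])))
      hχ cmχ
  have step4 : (inner ℂ (T (toL2 ψdd)) (toL2 (mulX2 χ)) : ℂ)
      = inner ℂ (T Fψ) (toL2 (derivCLM ℝ ℂ (derivCLM ℝ ℂ (mulX2 χ)))) :=
    hdd ψ (mulX2 χ) Fψ (toL2 ψdd) (toL2 (mulX2 χ)) _ hψ cψdd (coe_toL2 _) cddmχ
  rw [key1, map_sub, inner_sub_left, step1, step2, step3, step4, ← inner_sub_right, key2,
    inner_neg_right]
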